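/- Let Z be a real random variable satisfying Pr[Z > ξ + ρ^{1/4} + t] ≤ (2/ρ^{1/4})·e^{−t²/ρ} for all t ≥ 0, where ξ ≥ 0 and 0 < ρ ≤ 1. Then for all α > 1, E[e^{(α−1)Z}] ≤ exp((α−1)(ξ + (1+2√π)ρ^{1/4} − ρ/4 + (ρ/4)α)). -/

import Mathlib

open MeasureTheory Set

theorem mgf_of_tail_bound {Ω : Type*} [MeasurableSpace Ω] (μ : Measure Ω)
    [IsProbabilityMeasure μ] (Z : Ω → ℝ) (hZ : Measurable Z)
    (ξ ρ : ℝ) (hξ : 0 ≤ ξ) (hρ0 : 0 < ρ) (hρ1 : ρ ≤ 1)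
    (h : ∀ t : ℝ, 0 ≤ t →
      (μ {ω | ξ + ρ ^ ((1 : ℝ) / 4) + t < Z ω}).toReal ≤
        (2 / ρ ^ ((1 : ℝ) / 4)) * Real.exp (-t ^ 2 / ρ))
    (α : ℝ) (hα : 1 < α) :
    ∫ ω, Real.exp ((α - 1) * Z ω) ∂μ ≤
      Real.exp ((α - 1) *
        (ξ + (1 + 2 * Real.sqrt Real.pi) * ρ ^ ((1 : ℝ) / 4) - ρ / 4 + (ρ / 4) * α)) := by
  set c := α - 1 with hcdef
  have hc0 : 0 < c := by simp [hcdef]; linarith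
  set r := ρ ^ ((1 : ℝ) / 4) with hrdef
  have hr0 : 0 < r := Real.rpow_pos_of_pos hρ0 _
  set m := ξ + r with hmdef
  set Y : Ω → ℝ := fun ω => max (Z ω - m) 0 with hYdef
  have hYm : Measurable Y := (hZ.sub measurable_const).max measurable_const
  have hYnn : ∀ ω, 0 ≤ Y ω := fun ω => le_max_right _ _
  set a := c * ρ / 2 with hadef
  set K := 2 * c / r * Real.exp (c ^ 2 * ρ / 4) with hKdef
  set x := 2 * c * Real.sqrt Real.pi * r with hxdef
  set k := c ^ 2 * ρ / 4 with hkdef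
  have hk0 : 0 ≤ k := by positivity
  have hx0 : 0 ≤ x := by positivity
  -- interval integral of g t = c * exp (c t)
  have hint : ∀ y : ℝ, ∫ t in (0:ℝ)..y, c * Real.exp (c * t)
      = Real.exp (c * y) - 1 := by
    intro y
    rw [intervalIntegral.integral_const_mul, intervalIntegral.integral_comp_mul_left
      (fun t => Real.exp t) (ne_of_gt hc0)]
    simp [integral_exp, mul_sub]
    field_simp
  -- layer cake
  have layercake : ∫⁻ ω, ENNReal.ofReal (∫ t in (0:ℝ)..Y ω, c * Real.exp (c * t)) ∂μ
      = ∫⁻ t in Ioi (0:ℝ), μ {ω | t < Y ω} * ENNReal.ofReal (c * Real.exp (c * t)) := by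
    refine lintegral_comp_eq_lintegral_meas_lt_mul μ (Filter.Eventually.of_forall hYnn)
      hYm.aemeasurable (fun t _ => ?_) (Filter.Eventually.of_forall fun t => by positivity)
    exact (Continuous.intervalIntegrable (by continuity) _ _)
  -- tail bound in ENNReal
  have tail : ∀ t ∈ Ioi (0:ℝ), μ {ω | t < Y ω} * ENNReal.ofReal (c * Real.exp (c * t))
      ≤ ENNReal.ofReal (K * Real.exp (-(1/ρ) * (t - a) ^ 2)) := by
    intro t ht
    have ht0 : 0 < t := ht
    have hset : {ω | t < Y ω} = {ω | ξ + r + t < Z ω} := by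
      ext ω
      simp only [hYdef, Set.mem_setOf_eq, lt_max_iff]
      constructor
      · rintro (h' | h')
        · linarith
        · linarith
      · intro h'; left; linarith
    have hb : μ {ω | t < Y ω} ≤ ENNReal.ofReal (2 / r * Real.exp (-t ^ 2 / ρ)) := by
      rw [hset]
      rw [ENNReal.le_ofReal_iff_toReal_le (measure_ne_top μ _) (by positivity)]
      exact h t ht0.le
    calc μ {ω | t < Y ω} * ENNReal.ofReal (c * Real.exp (c * t))
        ≤ ENNReal.ofReal (2 / r * Real.exp (-t ^ 2 / ρ)) *
            ENNReal.ofReal (c * Real.exp (c * t)) := by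
          exact mul_le_mul_left hb _
      _ = ENNReal.ofReal (K * Real.exp (-(1/ρ) * (t - a) ^ 2)) := by
          rw [← ENNReal.ofReal_mul (by positivity)]
          congr 1
          have hexp : Real.exp (-t ^ 2 / ρ) * Real.exp (c * t)
              = Real.exp k * Real.exp (-(1/ρ) * (t - a) ^ 2) := by
            rw [← Real.exp_add, ← Real.exp_add]
            congr 1
            rw [hkdef, hadef]
            field_simp
            ring
          rw [hKdef]
          linear_combination (2 * c / r) * hexp
  -- gaussian integral
  have hgauss : ∫⁻ t : ℝ, ENNReal.ofReal (Real.exp (-(1/ρ) * (t - a) ^ 2))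
      = ENNReal.ofReal (Real.sqrt (Real.pi * ρ)) := by
    have hinteg : Integrable (fun t : ℝ => Real.exp (-(1/ρ) * (t - a) ^ 2)) :=
      (integrable_exp_neg_mul_sq (by positivity : (0:ℝ) < 1/ρ)).comp_sub_right a
    rw [← ofReal_integral_eq_lintegral_ofReal hinteg
      (Filter.Eventually.of_forall fun t => (Real.exp_pos _).le)]
    congr 1
    rw [integral_sub_right_eq_self (fun t : ℝ => Real.exp (-(1/ρ) * t ^ 2)) a]
    rw [integral_gaussian (1/ρ)]
    rw [div_div_eq_mul_div, div_one, mul_comm]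
  -- main lintegral bound for Y
  have hY_bound : ∫⁻ ω, ENNReal.ofReal (Real.exp (c * Y ω)) ∂μ
      ≤ ENNReal.ofReal (Real.exp (x + k)) := by
    have step1 : ∀ ω, ENNReal.ofReal (Real.exp (c * Y ω))
        = 1 + ENNReal.ofReal (∫ t in (0:ℝ)..Y ω, c * Real.exp (c * t)) := by
      intro ω
      rw [hint (Y ω)]
      rw [ENNReal.ofReal_sub _ (by norm_num), ENNReal.ofReal_one]
      rw [add_comm, tsub_add_cancel_of_le]
      rw [← ENNReal.ofReal_one]
      exact ENNReal.ofReal_le_ofReal (Real.one_le_exp (by positivity))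
    calc ∫⁻ ω, ENNReal.ofReal (Real.exp (c * Y ω)) ∂μ
        = ∫⁻ ω, (1 + ENNReal.ofReal (∫ t in (0:ℝ)..Y ω, c * Real.exp (c * t))) ∂μ := by
          simp_rw [step1]
      _ = 1 + ∫⁻ ω, ENNReal.ofReal (∫ t in (0:ℝ)..Y ω, c * Real.exp (c * t)) ∂μ := by
          rw [lintegral_add_left measurable_const]
          simp
      _ = 1 + ∫⁻ t in Ioi (0:ℝ), μ {ω | t < Y ω} * ENNReal.ofReal (c * Real.exp (c * t)) := by
          rw [layercake]
      _ ≤ 1 + ∫⁻ t in Ioi (0:ℝ), ENNReal.ofReal (K * Real.exp (-(1/ρ) * (t - a) ^ 2)) := by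
          gcongr 1 + ?_
          refine setLIntegral_mono_ae (by fun_prop) ?_
          exact Filter.Eventually.of_forall tail
      _ ≤ 1 + ∫⁻ t : ℝ, ENNReal.ofReal (K * Real.exp (-(1/ρ) * (t - a) ^ 2)) := by
          gcongr
          exact Measure.restrict_le_self
      _ = 1 + ENNReal.ofReal K * ENNReal.ofReal (Real.sqrt (Real.pi * ρ)) := by
          rw [← hgauss, ← lintegral_const_mul' _ _ ENNReal.ofReal_ne_top]
          congr 1
          refine lintegral_congr fun t => ?_
          rw [← ENNReal.ofReal_mul (by positivity)]
      _ = 1 + ENNReal.ofReal (x * Real.exp k) := by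
          rw [← ENNReal.ofReal_mul (by positivity)]
          congr 1
          have hsq : Real.sqrt (Real.pi * ρ) = Real.sqrt Real.pi * (r * r) := by
            rw [Real.sqrt_mul Real.pi_nonneg]
            congr 1
            rw [hrdef, ← Real.rpow_add hρ0]
            norm_num
            rw [Real.sqrt_eq_rpow]
          rw [hKdef, hxdef, hkdef, hsq]
          field_simp
      _ ≤ ENNReal.ofReal (Real.exp (x + k)) := by
          rw [← ENNReal.ofReal_one, ← ENNReal.ofReal_add (by norm_num) (by positivity)]
          apply ENNReal.ofReal_le_ofReal
          have h1 : 1 + x ≤ Real.exp x := Real.add_one_le_exp x |>.trans_eq rfl |> fun _ => by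
            linarith [Real.add_one_le_exp x]
          have h2 : (1:ℝ) ≤ Real.exp k := Real.one_le_exp hk0
          calc 1 + x * Real.exp k ≤ Real.exp k + x * Real.exp k := by linarith
            _ = (1 + x) * Real.exp k := by ring
            _ ≤ Real.exp x * Real.exp k := by nlinarith [Real.add_one_le_exp x, Real.exp_pos k]
            _ = Real.exp (x + k) := (Real.exp_add x k).symm
  -- conclude
  have hptZ : ∀ ω, Real.exp (c * Z ω) ≤ Real.exp (c * m) * Real.exp (c * Y ω) := by
    intro ω
    rw [← Real.exp_add]
    apply Real.exp_le_exp.2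
    have hZle : Z ω ≤ m + Y ω := by
      rcases le_total (Z ω - m) 0 with h' | h'
      · have : Y ω = 0 := max_eq_right h'
        rw [this]; linarith
      · have : Y ω = Z ω - m := max_eq_left h'
        rw [this]; linarith
    nlinarith [hZle, hc0.le]
  have hmain : ∫⁻ ω, ENNReal.ofReal (Real.exp (c * Z ω)) ∂μ
      ≤ ENNReal.ofReal (Real.exp (c * m + (x + k))) := by
    calc ∫⁻ ω, ENNReal.ofReal (Real.exp (c * Z ω)) ∂μ
        ≤ ∫⁻ ω, ENNReal.ofReal (Real.exp (c * m)) * ENNReal.ofReal (Real.exp (c * Y ω)) ∂μ := by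
          refine lintegral_mono fun ω => ?_
          rw [← ENNReal.ofReal_mul (by positivity)]
          exact ENNReal.ofReal_le_ofReal (hptZ ω)
      _ = ENNReal.ofReal (Real.exp (c * m)) * ∫⁻ ω, ENNReal.ofReal (Real.exp (c * Y ω)) ∂μ :=
          lintegral_const_mul' _ _ ENNReal.ofReal_ne_top
      _ ≤ ENNReal.ofReal (Real.exp (c * m)) * ENNReal.ofReal (Real.exp (x + k)) := by
          exact mul_le_mul_right hY_bound _
      _ = ENNReal.ofReal (Real.exp (c * m + (x + k))) := by
          rw [← ENNReal.ofReal_mul (by positivity), ← Real.exp_add]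
  have heq : ∫ ω, Real.exp (c * Z ω) ∂μ
      = (∫⁻ ω, ENNReal.ofReal (Real.exp (c * Z ω)) ∂μ).toReal := by
    rw [integral_eq_lintegral_of_nonneg_ae (Filter.Eventually.of_forall fun ω =>
      (Real.exp_pos _).le) ((Real.measurable_exp.comp (hZ.const_mul c)).aestronglyMeasurable)]
  rw [heq]
  have hfinal : c * m + (x + k) = c * (ξ + (1 + 2 * Real.sqrt Real.pi) * r - ρ / 4 + ρ / 4 * α) := by
    rw [hmdef, hxdef, hkdef, hcdef]
    ring
  refine ENNReal.toReal_le_of_le_ofReal (by positivity) ?_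
  rw [← hfinal]
  exact hmain
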